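/- Σ_{t≥0} C_{2t}(q) = ∏_{k≥1} (1−q^{4k})(1−q^{6k})² · ((1−q^k)(1−q^{3k})(1−q^{12k}))^{−1} in ℚ⟦q⟧. -/

import Mathlib

open PowerSeries Finset

noncomputable section

/-- The operator `D = q·d/dq` on `ℚ⟦q⟧`, coefficientwise `aₙ ↦ n·aₙ`. -/
def Dq (F : ℚ⟦X⟧) : ℚ⟦X⟧ := PowerSeries.mk fun n => (n : ℚ) * coeff (R := ℚ) n F

/-- `E₂(q) = 1 - 24 Σ_{n≥1} σ₁(n) qⁿ`. -/
def E2 : ℚ⟦X⟧ := PowerSeries.mk fun n => if n = 0 then 1 else -24 * ∑ d ∈ n.divisors, (d : ℚ)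

/-- `E₄(q) = 1 + 240 Σ_{n≥1} σ₃(n) qⁿ`. -/
def E4 : ℚ⟦X⟧ := PowerSeries.mk fun n => if n = 0 then 1 else 240 * ∑ d ∈ n.divisors, (d : ℚ) ^ 3

/-- `E₆(q) = 1 - 504 Σ_{n≥1} σ₅(n) qⁿ`. -/
def E6 : ℚ⟦X⟧ := PowerSeries.mk fun n => if n = 0 then 1 else -504 * ∑ d ∈ n.divisors, (d : ℚ) ^ 5

/-- `∏_{k≥1} (1 - qᵏ)`, defined coefficientwise by truncated finite products
(factors with `k > N` do not affect the `N`-th coefficient). -/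
def eulerProd : ℚ⟦X⟧ :=
  PowerSeries.mk fun N => coeff (R := ℚ) N (∏ k ∈ Finset.Icc 1 N, (1 - X ^ k : ℚ⟦X⟧))

/-- `Σ_{n ∈ ℤ} (-1)ⁿ (6n+1)^{2t} q^{n(3n+1)/2}` (any `n` with `n(3n+1)/2 = N`
satisfies `|n| ≤ N`). -/
def pentagonalSum (t : ℕ) : ℚ⟦X⟧ := PowerSeries.mk fun N =>
  ∑ n ∈ Finset.Icc (-(N : ℤ)) (N : ℤ),
    if n * (3 * n + 1) = 2 * N then (-1 : ℚ) ^ n * ((6 * n + 1 : ℤ) : ℚ) ^ (2 * t) else 0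

/-- `θ₂(q)⁴ = 16 q (Σ_{n≥0} q^{n(n+1)})⁴`. -/
def theta2four : ℚ⟦X⟧ :=
  16 * X * (PowerSeries.mk fun N => ∑ n ∈ Finset.range (N + 1),
    if n * (n + 1) = N then (1 : ℚ) else 0) ^ 4

/-- `θ₃(q) = 1 + 2 Σ_{n≥1} q^{n²}`. -/
def theta3 : ℚ⟦X⟧ :=
  1 + 2 * PowerSeries.mk fun N => ∑ n ∈ Finset.Icc 1 N, if n ^ 2 = N then (1 : ℚ) else 0

/-- `θ₄(q) = 1 + 2 Σ_{n≥1} (-1)ⁿ q^{n²}`. -/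
def theta4 : ℚ⟦X⟧ :=
  1 + 2 * PowerSeries.mk fun N => ∑ n ∈ Finset.Icc 1 N, if n ^ 2 = N then (-1 : ℚ) ^ n else 0

/-- `Θ_{r,s} = θ₂^{4r} θ₃^{4s} + θ₂^{4s} θ₃^{4r}`. -/
def Theta (r s : ℕ) : ℚ⟦X⟧ :=
  theta2four ^ r * theta3 ^ (4 * s) + theta2four ^ s * theta3 ^ (4 * r)

/-- MacMahon's `C_{2t}(q) = Σ_{0<s₁<⋯<s_t} q^{Σ(2sᵢ-1)} ∏ (1-q^{2sᵢ-1})⁻²`,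
defined coefficientwise: tuples with some `sᵢ > N+1` do not affect the `N`-th coefficient. -/
def Cmac (t : ℕ) : ℚ⟦X⟧ := PowerSeries.mk fun N =>
  coeff (R := ℚ) N (∑ S ∈ (Finset.Icc 1 (N + 1)).powersetCard t,
    ∏ s ∈ S, (X ^ (2 * s - 1) * ((1 - X ^ (2 * s - 1) : ℚ⟦X⟧)⁻¹) ^ 2))

/-- MacMahon's `U_{2t}(q) = Σ_{0<k₁<⋯<k_t} q^{Σkᵢ} ∏ (1-q^{kᵢ})⁻²`,
defined coefficientwise by truncation. -/
def Umac (t : ℕ) : ℚ⟦X⟧ := PowerSeries.mk fun N =>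
  coeff (R := ℚ) N (∑ S ∈ (Finset.Icc 1 (N + 1)).powersetCard t,
    ∏ k ∈ S, (X ^ k * ((1 - X ^ k : ℚ⟦X⟧)⁻¹) ^ 2))

/-- `U*_{2t}(q) = Σ_{0<k₁≤⋯≤k_t} q^{Σkᵢ} ∏ (1-q^{kᵢ})⁻²`, a sum over multisets of
size `t`, defined coefficientwise by truncation. -/
def UmacStar (t : ℕ) : ℚ⟦X⟧ := PowerSeries.mk fun N =>
  coeff (R := ℚ) N (∑ m ∈ (Finset.Icc 1 (N + 1)).sym t,
    ((m : Multiset ℕ).map fun k => X ^ k * ((1 - X ^ k : ℚ⟦X⟧)⁻¹) ^ 2).prod)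

/-- `E₂(q²)`, the substitution `q ↦ q²` in `E₂`. -/
def E2sq : ℚ⟦X⟧ := PowerSeries.mk fun n => if 2 ∣ n then coeff (R := ℚ) (n / 2) E2 else 0

/-- `G₂(q) = 2 E₂(q²) - E₂(q)`. -/
def G2 : ℚ⟦X⟧ := 2 * E2sq - E2

/-- `Σ_{t≥0} C_{2t}(q)`, well defined since `C_{2t}` has order `≥ t² ≥ t`. -/
def sumC : ℚ⟦X⟧ := PowerSeries.mk fun N => ∑ t ∈ Finset.range (N + 1), coeff (R := ℚ) N (Cmac t)

namespace SumCmacAux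

def pr (N : ℕ) : ℚ⟦X⟧ →+* ℚ⟦X⟧ ⧸ Ideal.span {(X : ℚ⟦X⟧) ^ (N + 1)} :=
  Ideal.Quotient.mk _

lemma coeff_eq_of_pr_eq {N : ℕ} {A B : ℚ⟦X⟧} (h : pr N A = pr N B) :
    coeff (R := ℚ) N A = coeff (R := ℚ) N B := by
  have hd : (X : ℚ⟦X⟧) ^ (N + 1) ∣ A - B := by
    rw [← Ideal.mem_span_singleton]
    exact Ideal.Quotient.eq.mp h
  have h0 := PowerSeries.X_pow_dvd_iff.mp hd N (Nat.lt_succ_self N)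
  rw [map_sub] at h0
  linarith

lemma constCoeff_one_sub (m : ℕ) (hm : 1 ≤ m) :
    constantCoeff (R := ℚ) (1 - X ^ m) = 1 := by
  rw [map_sub, map_one, map_pow, constantCoeff_X, zero_pow (by omega), sub_zero]

lemma isUnit_one_sub (m : ℕ) (hm : 1 ≤ m) : IsUnit (1 - X ^ m : ℚ⟦X⟧) :=
  IsUnit.of_mul_eq_one _
    (PowerSeries.mul_inv_cancel _ (by rw [constCoeff_one_sub m hm]; norm_num))

lemma inv_mul (m : ℕ) (hm : 1 ≤ m) : (1 - X ^ m : ℚ⟦X⟧)⁻¹ * (1 - X ^ m) = 1 :=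
  PowerSeries.inv_mul_cancel _ (by rw [constCoeff_one_sub m hm]; norm_num)

lemma pr_tail {N : ℕ} (m : ℕ) (hm : N < m) : pr N (1 - X ^ m : ℚ⟦X⟧) = 1 := by
  have h0 : pr N ((X : ℚ⟦X⟧) ^ m) = 0 := by
    rw [pr, Ideal.Quotient.eq_zero_iff_mem, Ideal.mem_span_singleton]
    exact pow_dvd_pow _ (by omega)
  rw [map_sub, map_one, h0, sub_zero]

def cnt (g : ℕ → ℕ) (T m : ℕ) : ℕ := ((Icc 1 T).filter fun s => g s = m).card

lemma pr_prod (N T : ℕ) (g : ℕ → ℕ) (hg : ∀ s, 1 ≤ s → 1 ≤ g s) :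
    pr N (∏ s ∈ Icc 1 T, (1 - X ^ g s : ℚ⟦X⟧)) =
      pr N (∏ m ∈ Icc 1 N, (1 - X ^ m : ℚ⟦X⟧) ^ cnt g T m) := by
  have h1 : (∏ m ∈ Icc 1 N, (1 - X ^ m : ℚ⟦X⟧) ^ cnt g T m) =
      ∏ s ∈ (Icc 1 T).filter (fun s => g s ≤ N), (1 - X ^ g s : ℚ⟦X⟧) := by
    rw [← Finset.prod_fiberwise_of_maps_to (g := g) (t := Icc 1 N)
        (fun s hs => by
          simp only [Finset.mem_filter, Finset.mem_Icc] at hs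
          exact Finset.mem_Icc.mpr ⟨hg s hs.1.1, hs.2⟩)
        (fun s => (1 - X ^ g s : ℚ⟦X⟧))]
    apply Finset.prod_congr rfl
    intro m hm
    simp only [Finset.mem_Icc] at hm
    have hfe : (((Icc 1 T).filter (fun s => g s ≤ N)).filter (fun s => g s = m)) =
        (Icc 1 T).filter (fun s => g s = m) := by
      rw [Finset.filter_filter]
      ext s
      simp only [Finset.mem_filter, Finset.mem_Icc]
      omega
    rw [hfe]
    calc (1 - X ^ m : ℚ⟦X⟧) ^ cnt g T m
        = ∏ _s ∈ (Icc 1 T).filter (fun s => g s = m), (1 - X ^ m : ℚ⟦X⟧) := by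
          rw [Finset.prod_const, cnt]
      _ = ∏ s ∈ (Icc 1 T).filter (fun s => g s = m), (1 - X ^ g s : ℚ⟦X⟧) :=
          Finset.prod_congr rfl (fun s hs => by rw [(Finset.mem_filter.mp hs).2])
  rw [h1, ← Finset.prod_filter_mul_prod_filter_not (Icc 1 T) (fun s => g s ≤ N)
      (fun s => (1 - X ^ g s : ℚ⟦X⟧)), map_mul]
  have h2 : pr N (∏ s ∈ (Icc 1 T).filter (fun s => ¬ g s ≤ N), (1 - X ^ g s : ℚ⟦X⟧)) = 1 := by
    rw [map_prod]
    apply Finset.prod_eq_one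
    intro s hs
    exact pr_tail _ (Nat.lt_of_not_le (Finset.mem_filter.mp hs).2)
  rw [h2, mul_one]

lemma cnt_mul_eq (a : ℕ) (ha : 1 ≤ a) (T m : ℕ) (hm : 1 ≤ m) (hmT : m ≤ T) :
    cnt (fun k => a * k) T m = if a ∣ m then 1 else 0 := by
  unfold cnt
  split_ifs with h
  · rw [Finset.card_eq_one]
    refine ⟨m / a, ?_⟩
    ext s
    simp only [Finset.mem_filter, Finset.mem_Icc, Finset.mem_singleton]
    constructor
    · rintro ⟨⟨h1, h2⟩, heq⟩
      rw [← heq, Nat.mul_div_cancel_left _ (by omega : 0 < a)]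
    · rintro rfl
      have hM := Nat.le_of_dvd (by omega) h
      refine ⟨⟨?_, ?_⟩, Nat.mul_div_cancel' h⟩
      · exact (Nat.one_le_div_iff (by omega)).mpr hM
      · exact le_trans (Nat.div_le_self _ _) hmT
  · rw [Finset.card_eq_zero, Finset.filter_eq_empty_iff]
    intro s _
    exact fun heq => h ⟨s, heq.symm⟩

lemma cnt_oddmul_eq (a : ℕ) (ha : 1 ≤ a) (T m : ℕ) (hm : 1 ≤ m) (hmT : m ≤ T) :
    cnt (fun s => a * (2 * s - 1)) T m = if a ∣ m ∧ (m / a) % 2 = 1 then 1 else 0 := by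
  unfold cnt
  split_ifs with h
  · obtain ⟨hdvd, hodd⟩ := h
    have hda : a * (m / a) = m := Nat.mul_div_cancel' hdvd
    rw [Finset.card_eq_one]
    refine ⟨(m / a + 1) / 2, ?_⟩
    ext s
    simp only [Finset.mem_filter, Finset.mem_Icc, Finset.mem_singleton]
    constructor
    · rintro ⟨⟨h1, h2⟩, heq⟩
      have hcancel : 2 * s - 1 = m / a :=
        Nat.eq_of_mul_eq_mul_left (by omega) (heq.trans hda.symm)
      omega
    · rintro rfl
      have hdm : m / a ≤ m := Nat.div_le_self m a
      generalize hd : m / a = d at hodd hdm hda ⊢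
      refine ⟨⟨by omega, by omega⟩, ?_⟩
      have h2d : 2 * ((d + 1) / 2) - 1 = d := by omega
      rw [h2d, hda]
  · rw [Finset.card_eq_zero, Finset.filter_eq_empty_iff]
    intro s hs
    simp only [Finset.mem_Icc] at hs
    intro heq
    apply h
    have hdvd : a ∣ m := ⟨2 * s - 1, heq.symm⟩
    refine ⟨hdvd, ?_⟩
    have : m / a = 2 * s - 1 := by rw [← heq, Nat.mul_div_cancel_left _ (by omega : 0 < a)]
    omega

lemma cnt_odd (T m : ℕ) (hm : 1 ≤ m) (hmT : m ≤ T) :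
    cnt (fun s => 2 * s - 1) T m = if m % 2 = 1 then 1 else 0 := by
  have h := cnt_oddmul_eq 1 le_rfl T m hm hmT
  simpa using h

lemma cnt_id (T m : ℕ) (hm : 1 ≤ m) (hmT : m ≤ T) :
    cnt (fun k => k) T m = 1 := by
  have h := cnt_mul_eq 1 le_rfl T m hm hmT
  simpa using h


def ff (s : ℕ) : ℚ⟦X⟧ := X ^ (2 * s - 1) * ((1 - X ^ (2 * s - 1) : ℚ⟦X⟧)⁻¹) ^ 2

lemma factor_left_full (s : ℕ) (hs : 1 ≤ s) :
    (ff s + 1) * ((1 - X ^ (2 * s - 1)) * ((1 - X ^ (2 * s - 1)) *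
        ((1 - X ^ (2 * (2 * s - 1))) * (1 - X ^ (3 * (2 * s - 1)))))) =
    (1 - X ^ (2 * s - 1)) * (1 - X ^ (6 * (2 * s - 1)) : ℚ⟦X⟧) := by
  set j := 2 * s - 1 with hj
  have hj1 : 1 ≤ j := by omega
  have hinv : (1 - X ^ j : ℚ⟦X⟧)⁻¹ * (1 - X ^ j) = 1 := inv_mul j hj1
  have e2 : (X : ℚ⟦X⟧) ^ (2 * j) = (X ^ j) ^ 2 := by rw [pow_mul']
  have e3 : (X : ℚ⟦X⟧) ^ (3 * j) = (X ^ j) ^ 3 := by rw [pow_mul']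
  have e6 : (X : ℚ⟦X⟧) ^ (6 * j) = (X ^ j) ^ 6 := by rw [pow_mul']
  rw [ff, ← hj, e2, e3, e6]
  have expand : (X ^ j * ((1 - X ^ j : ℚ⟦X⟧)⁻¹) ^ 2 + 1) * ((1 - X ^ j) * (1 - X ^ j))
      = 1 - X ^ j + (X ^ j) ^ 2 := by
    have hsq : ((1 - X ^ j : ℚ⟦X⟧)⁻¹) ^ 2 * (1 - X ^ j) ^ 2 = 1 := by
      rw [← mul_pow, hinv, one_pow]
    calc (X ^ j * ((1 - X ^ j : ℚ⟦X⟧)⁻¹) ^ 2 + 1) * ((1 - X ^ j) * (1 - X ^ j))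
        = X ^ j * (((1 - X ^ j : ℚ⟦X⟧)⁻¹) ^ 2 * (1 - X ^ j) ^ 2) + (1 - X ^ j) ^ 2 := by
          ring
      _ = 1 - X ^ j + (X ^ j) ^ 2 := by rw [hsq]; ring
  calc (X ^ j * ((1 - X ^ j : ℚ⟦X⟧)⁻¹) ^ 2 + 1) *
        ((1 - X ^ j) * ((1 - X ^ j) * ((1 - (X ^ j) ^ 2) * (1 - (X ^ j) ^ 3))))
      = ((X ^ j * ((1 - X ^ j : ℚ⟦X⟧)⁻¹) ^ 2 + 1) * ((1 - X ^ j) * (1 - X ^ j))) *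
          ((1 - (X ^ j) ^ 2) * (1 - (X ^ j) ^ 3)) := by ring
    _ = (1 - X ^ j + (X ^ j) ^ 2) * ((1 - (X ^ j) ^ 2) * (1 - (X ^ j) ^ 3)) := by rw [expand]
    _ = (1 - X ^ j) * (1 - (X ^ j) ^ 6) := by ring

lemma factor_right_full (k : ℕ) (hk : 1 ≤ k) :
    ((1 - X ^ (4 * k)) * (1 - X ^ (6 * k)) ^ 2 *
        ((1 - X ^ k : ℚ⟦X⟧)⁻¹ * (1 - X ^ (3 * k) : ℚ⟦X⟧)⁻¹ * (1 - X ^ (12 * k) : ℚ⟦X⟧)⁻¹)) *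
      ((1 - X ^ k) * ((1 - X ^ (3 * k)) * (1 - X ^ (12 * k)))) =
    (1 - X ^ (4 * k)) * ((1 - X ^ (6 * k)) * (1 - X ^ (6 * k)) : ℚ⟦X⟧) := by
  have h1 := inv_mul k hk
  have h3 := inv_mul (3 * k) (by omega)
  have h12 := inv_mul (12 * k) (by omega)
  calc ((1 - X ^ (4 * k)) * (1 - X ^ (6 * k)) ^ 2 *
        ((1 - X ^ k : ℚ⟦X⟧)⁻¹ * (1 - X ^ (3 * k) : ℚ⟦X⟧)⁻¹ * (1 - X ^ (12 * k) : ℚ⟦X⟧)⁻¹)) *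
      ((1 - X ^ k) * ((1 - X ^ (3 * k)) * (1 - X ^ (12 * k))))
      = (1 - X ^ (4 * k)) * (1 - X ^ (6 * k)) ^ 2 *
        (((1 - X ^ k : ℚ⟦X⟧)⁻¹ * (1 - X ^ k)) *
          (((1 - X ^ (3 * k) : ℚ⟦X⟧)⁻¹ * (1 - X ^ (3 * k))) *
            ((1 - X ^ (12 * k) : ℚ⟦X⟧)⁻¹ * (1 - X ^ (12 * k))))) := by ring
    _ = (1 - X ^ (4 * k)) * ((1 - X ^ (6 * k)) * (1 - X ^ (6 * k))) := by
        rw [h1, h3, h12]; ring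

lemma isUnit_finprod {ι : Type*} (S : Finset ι) (f : ι → ℚ⟦X⟧)
    (h : ∀ i ∈ S, IsUnit (f i)) : IsUnit (∏ i ∈ S, f i) := by
  classical
  induction S using Finset.induction_on with
  | empty => simp
  | insert _ _ hmem ih =>
    rw [Finset.prod_insert hmem]
    exact (h _ (Finset.mem_insert_self _ _)).mul
      (ih fun i hi => h i (Finset.mem_insert_of_mem hi))

set_option maxHeartbeats 1000000 in
lemma main_cong (N : ℕ) :
    coeff (R := ℚ) N (∏ s ∈ Icc 1 (N + 1), (ff s + 1)) =
    coeff (R := ℚ) N (∏ k ∈ Icc 1 N, ((1 - X ^ (4 * k)) * (1 - X ^ (6 * k)) ^ 2 *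
        ((1 - X ^ k : ℚ⟦X⟧)⁻¹ * (1 - X ^ (3 * k) : ℚ⟦X⟧)⁻¹ *
          (1 - X ^ (12 * k) : ℚ⟦X⟧)⁻¹))) := by
  apply coeff_eq_of_pr_eq
  set U1 : ℚ⟦X⟧ := ∏ s ∈ Icc 1 (N + 1),
      ((1 - X ^ (2 * s - 1)) * ((1 - X ^ (2 * s - 1)) *
        ((1 - X ^ (2 * (2 * s - 1))) * (1 - X ^ (3 * (2 * s - 1)))))) with hU1
  set U0 : ℚ⟦X⟧ := ∏ k ∈ Icc 1 N,
      ((1 - X ^ k) * ((1 - X ^ (3 * k)) * (1 - X ^ (12 * k)))) with hU0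
  have hU1unit : IsUnit U1 := by
    apply isUnit_finprod
    intro s hs
    simp only [Finset.mem_Icc] at hs
    exact ((isUnit_one_sub _ (by omega)).mul ((isUnit_one_sub _ (by omega)).mul
      ((isUnit_one_sub _ (by omega)).mul (isUnit_one_sub _ (by omega)))))
  have hU0unit : IsUnit U0 := by
    apply isUnit_finprod
    intro k hk
    simp only [Finset.mem_Icc] at hk
    exact ((isUnit_one_sub _ (by omega)).mul ((isUnit_one_sub _ (by omega)).mul
      (isUnit_one_sub _ (by omega))))
  apply ((hU1unit.mul hU0unit).map (pr N)).mul_right_cancel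
  rw [← map_mul, ← map_mul]
  have hAP : (∏ s ∈ Icc 1 (N + 1), (ff s + 1)) * (U1 * U0)
      = ((∏ s ∈ Icc 1 (N + 1), (1 - X ^ (2 * s - 1) : ℚ⟦X⟧)) *
         (∏ s ∈ Icc 1 (N + 1), (1 - X ^ (6 * (2 * s - 1)) : ℚ⟦X⟧))) *
        ((∏ k ∈ Icc 1 N, (1 - X ^ k : ℚ⟦X⟧)) *
         ((∏ k ∈ Icc 1 N, (1 - X ^ (3 * k) : ℚ⟦X⟧)) *
          (∏ k ∈ Icc 1 N, (1 - X ^ (12 * k) : ℚ⟦X⟧)))) := by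
    have step1 : (∏ s ∈ Icc 1 (N + 1), (ff s + 1)) * U1
        = ∏ s ∈ Icc 1 (N + 1),
            ((1 - X ^ (2 * s - 1)) * (1 - X ^ (6 * (2 * s - 1)) : ℚ⟦X⟧)) := by
      rw [hU1, ← Finset.prod_mul_distrib]
      apply Finset.prod_congr rfl
      intro s hs
      simp only [Finset.mem_Icc] at hs
      exact factor_left_full s hs.1
    calc (∏ s ∈ Icc 1 (N + 1), (ff s + 1)) * (U1 * U0)
        = ((∏ s ∈ Icc 1 (N + 1), (ff s + 1)) * U1) * U0 := by ring
      _ = (∏ s ∈ Icc 1 (N + 1),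
            ((1 - X ^ (2 * s - 1)) * (1 - X ^ (6 * (2 * s - 1)) : ℚ⟦X⟧))) * U0 := by
          rw [step1]
      _ = _ := by rw [hU0]; simp only [Finset.prod_mul_distrib]; try ring
  have hBQ : (∏ k ∈ Icc 1 N, ((1 - X ^ (4 * k)) * (1 - X ^ (6 * k)) ^ 2 *
        ((1 - X ^ k : ℚ⟦X⟧)⁻¹ * (1 - X ^ (3 * k) : ℚ⟦X⟧)⁻¹ *
          (1 - X ^ (12 * k) : ℚ⟦X⟧)⁻¹))) * (U1 * U0)
      = ((∏ k ∈ Icc 1 N, (1 - X ^ (4 * k) : ℚ⟦X⟧)) *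
         ((∏ k ∈ Icc 1 N, (1 - X ^ (6 * k) : ℚ⟦X⟧)) *
          (∏ k ∈ Icc 1 N, (1 - X ^ (6 * k) : ℚ⟦X⟧)))) *
        ((∏ s ∈ Icc 1 (N + 1), (1 - X ^ (2 * s - 1) : ℚ⟦X⟧)) *
         ((∏ s ∈ Icc 1 (N + 1), (1 - X ^ (2 * s - 1) : ℚ⟦X⟧)) *
          ((∏ s ∈ Icc 1 (N + 1), (1 - X ^ (2 * (2 * s - 1)) : ℚ⟦X⟧)) *
           (∏ s ∈ Icc 1 (N + 1), (1 - X ^ (3 * (2 * s - 1)) : ℚ⟦X⟧))))) := by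
    have step1 : (∏ k ∈ Icc 1 N, ((1 - X ^ (4 * k)) * (1 - X ^ (6 * k)) ^ 2 *
          ((1 - X ^ k : ℚ⟦X⟧)⁻¹ * (1 - X ^ (3 * k) : ℚ⟦X⟧)⁻¹ *
            (1 - X ^ (12 * k) : ℚ⟦X⟧)⁻¹))) * U0
        = ∏ k ∈ Icc 1 N,
            ((1 - X ^ (4 * k)) * ((1 - X ^ (6 * k)) * (1 - X ^ (6 * k)) : ℚ⟦X⟧)) := by
      rw [hU0, ← Finset.prod_mul_distrib]
      apply Finset.prod_congr rfl
      intro k hk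
      simp only [Finset.mem_Icc] at hk
      exact factor_right_full k hk.1
    calc (∏ k ∈ Icc 1 N, ((1 - X ^ (4 * k)) * (1 - X ^ (6 * k)) ^ 2 *
          ((1 - X ^ k : ℚ⟦X⟧)⁻¹ * (1 - X ^ (3 * k) : ℚ⟦X⟧)⁻¹ *
            (1 - X ^ (12 * k) : ℚ⟦X⟧)⁻¹))) * (U1 * U0)
        = ((∏ k ∈ Icc 1 N, ((1 - X ^ (4 * k)) * (1 - X ^ (6 * k)) ^ 2 *
            ((1 - X ^ k : ℚ⟦X⟧)⁻¹ * (1 - X ^ (3 * k) : ℚ⟦X⟧)⁻¹ *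
              (1 - X ^ (12 * k) : ℚ⟦X⟧)⁻¹))) * U0) * U1 := by ring
      _ = (∏ k ∈ Icc 1 N,
            ((1 - X ^ (4 * k)) * ((1 - X ^ (6 * k)) * (1 - X ^ (6 * k)) : ℚ⟦X⟧))) * U1 := by
          rw [step1]
      _ = _ := by rw [hU1]; simp only [Finset.prod_mul_distrib]; try ring
  rw [hAP, hBQ]
  have e1 := pr_prod N (N + 1) (fun s => 2 * s - 1) (fun s hs => by show 1 ≤ 2 * s - 1; omega)
  have e6o := pr_prod N (N + 1) (fun s => 6 * (2 * s - 1))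
    (fun s hs => by show 1 ≤ 6 * (2 * s - 1); omega)
  have e2o := pr_prod N (N + 1) (fun s => 2 * (2 * s - 1))
    (fun s hs => by show 1 ≤ 2 * (2 * s - 1); omega)
  have e3o := pr_prod N (N + 1) (fun s => 3 * (2 * s - 1))
    (fun s hs => by show 1 ≤ 3 * (2 * s - 1); omega)
  have eid := pr_prod N N (fun k => k) (fun k hk => hk)
  have e3 := pr_prod N N (fun k => 3 * k) (fun k hk => by show 1 ≤ 3 * k; omega)
  have e12 := pr_prod N N (fun k => 12 * k) (fun k hk => by show 1 ≤ 12 * k; omega)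
  have e4 := pr_prod N N (fun k => 4 * k) (fun k hk => by show 1 ≤ 4 * k; omega)
  have e6 := pr_prod N N (fun k => 6 * k) (fun k hk => by show 1 ≤ 6 * k; omega)
  simp only [map_mul]
  rw [e1, e6o, e2o, e3o, eid, e3, e12, e4, e6]
  simp only [← map_mul, ← Finset.prod_mul_distrib, ← pow_add]
  apply congrArg
  apply Finset.prod_congr rfl
  intro m hm
  simp only [Finset.mem_Icc] at hm
  obtain ⟨hm1, hm2⟩ := hm
  congr 1
  rw [cnt_odd (N + 1) m hm1 (by omega),
      cnt_oddmul_eq 6 (by norm_num) (N + 1) m hm1 (by omega),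
      cnt_oddmul_eq 2 (by norm_num) (N + 1) m hm1 (by omega),
      cnt_oddmul_eq 3 (by norm_num) (N + 1) m hm1 (by omega),
      cnt_id N m hm1 hm2,
      cnt_mul_eq 3 (by norm_num) N m hm1 hm2,
      cnt_mul_eq 12 (by norm_num) N m hm1 hm2,
      cnt_mul_eq 4 (by norm_num) N m hm1 hm2,
      cnt_mul_eq 6 (by norm_num) N m hm1 hm2]
  have h2 : (2 : ℕ) ∣ m ↔ m % 2 = 0 := by omega
  have h3 : (3 : ℕ) ∣ m ↔ m % 3 = 0 := by omega
  split_ifs <;> omega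

end SumCmacAux

open SumCmacAux in
/-- `Σ_{t≥0} C_{2t} = ∏_{k≥1} (1-q^{4k})(1-q^{6k})²/((1-qᵏ)(1-q^{3k})(1-q^{12k}))`. -/
theorem sum_Cmac_eq :
    sumC = PowerSeries.mk fun N => coeff (R := ℚ) N (∏ k ∈ Finset.Icc 1 N,
      ((1 - X ^ (4 * k)) * (1 - X ^ (6 * k)) ^ 2 *
        ((1 - X ^ k : ℚ⟦X⟧)⁻¹ * (1 - X ^ (3 * k) : ℚ⟦X⟧)⁻¹ * (1 - X ^ (12 * k) : ℚ⟦X⟧)⁻¹))) := by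
  ext N
  simp only [sumC, coeff_mk]
  have hcard : (Icc 1 (N + 1)).card = N + 1 := by rw [Nat.card_Icc]; omega
  have hCmac : ∀ t, coeff (R := ℚ) N (Cmac t) =
      ∑ S ∈ (Icc 1 (N + 1)).powersetCard t, coeff (R := ℚ) N (∏ s ∈ S, ff s) := by
    intro t
    rw [Cmac, coeff_mk, map_sum]
    rfl
  have hstep1 : ∑ t ∈ Finset.range (N + 1), coeff (R := ℚ) N (Cmac t)
      = coeff (R := ℚ) N (∏ s ∈ Icc 1 (N + 1), (ff s + 1)) := by
    have hA : (∏ s ∈ Icc 1 (N + 1), (ff s + 1))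
        = ∑ S ∈ (Icc 1 (N + 1)).powerset, ∏ s ∈ S, ff s := by
      rw [Finset.prod_add]
      simp
    have hzero : ∑ S ∈ Finset.powersetCard (N + 1) (Icc 1 (N + 1)),
        coeff (R := ℚ) N (∏ s ∈ S, ff s) = 0 := by
      have hself := Finset.powersetCard_self (Icc 1 (N + 1))
      rw [hcard] at hself
      rw [hself, Finset.sum_singleton]
      have h1 : ∏ _s ∈ Icc 1 (N + 1), (X : ℚ⟦X⟧) ∣ ∏ s ∈ Icc 1 (N + 1), ff s := by
        apply Finset.prod_dvd_prod_of_dvd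
        intro s hs
        simp only [Finset.mem_Icc] at hs
        exact (dvd_pow_self X (by omega : 2 * s - 1 ≠ 0)).mul_right _
      rw [Finset.prod_const, hcard] at h1
      exact PowerSeries.X_pow_dvd_iff.mp h1 N (Nat.lt_succ_self N)
    calc ∑ t ∈ Finset.range (N + 1), coeff (R := ℚ) N (Cmac t)
        = ∑ t ∈ Finset.range (N + 1), ∑ S ∈ Finset.powersetCard t (Icc 1 (N + 1)),
            coeff (R := ℚ) N (∏ s ∈ S, ff s) := Finset.sum_congr rfl fun t _ => hCmac t
      _ = ∑ t ∈ Finset.range (N + 1 + 1), ∑ S ∈ Finset.powersetCard t (Icc 1 (N + 1)),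
            coeff (R := ℚ) N (∏ s ∈ S, ff s) := by
          conv_rhs => rw [Finset.sum_range_succ]
          rw [hzero, add_zero]
      _ = ∑ S ∈ (Icc 1 (N + 1)).powerset, coeff (R := ℚ) N (∏ s ∈ S, ff s) := by
          rw [Finset.sum_powerset, hcard]
      _ = coeff (R := ℚ) N (∏ s ∈ Icc 1 (N + 1), (ff s + 1)) := by rw [hA, map_sum]
  rw [hstep1]
  exact main_cong N
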